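/- For every unweighted congestion game with cubic latency functions ℓ_e(x) = α_e x³ (α_e ≥ 0), the solution S achieved after any one-round walk starting from the empty strategy profile satisfies SUM(S) ≤ (17929/34)·SUM(O) for every strategy profile O. In particular, Apx¹_∅ of any such game is at most 17929/34 ≈ 527.323. -/

import Mathlib

open Finset

namespace CG

variable {n : ℕ} {E : Type*} [Fintype E] [DecidableEq E]

/-- The congestion (total weight) of resource `e` in profile `S`. -/
noncomputable def load (w : Fin n → ℝ) (S : Fin n → Finset E) (e : E) : ℝ :=
  ∑ i ∈ univ.filter fun i => e ∈ S i, w i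

/-- The cost of player `i` in profile `S`. -/
noncomputable def cost (w : Fin n → ℝ) (ℓ : E → ℝ → ℝ) (S : Fin n → Finset E) (i : Fin n) : ℝ :=
  ∑ e ∈ S i, ℓ e (load w S e)

/-- The social cost `SUM(S)`, the sum of the players' costs. -/
noncomputable def social (w : Fin n → ℝ) (ℓ : E → ℝ → ℝ) (S : Fin n → Finset E) : ℝ :=
  ∑ i, cost w ℓ S i

/-- The congestion of resource `e` due to the players preceding `i` (used for one-round walks). -/
noncomputable def preLoad (w : Fin n → ℝ) (S : Fin n → Finset E) (i : Fin n) (e : E) : ℝ :=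
  ∑ j ∈ univ.filter fun j => j < i ∧ e ∈ S j, w j

end CG

open CG

section Aux

lemma rank_sum {n : ℕ} (g : ℕ → ℝ) (T : Finset (Fin n)) :
    ∑ i ∈ T, g ((T.filter fun j => j < i).card) = ∑ k ∈ Finset.range T.card, g k := by
  induction T using Finset.strongInduction with
  | _ T ih =>
    rcases T.eq_empty_or_nonempty with rfl | hT
    · simp
    · set m := T.max' hT with hm
      have hmem : m ∈ T := T.max'_mem hT
      have hfilter_m : T.filter (fun j => j < m) = T.erase m := by
        ext x
        simp only [mem_filter, mem_erase]
        constructor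
        · rintro ⟨hx, hlt⟩; exact ⟨ne_of_lt hlt, hx⟩
        · rintro ⟨hne, hx⟩; exact ⟨hx, lt_of_le_of_ne (T.le_max' x hx) hne⟩
      have hcard : T.card = (T.erase m).card + 1 := by
        rw [card_erase_of_mem hmem]
        have : 0 < T.card := card_pos.2 hT
        omega
      have hstep : ∀ i ∈ T.erase m,
          ((T.erase m).filter fun j => j < i) = T.filter fun j => j < i := by
        intro i hi
        have him : i < m := lt_of_le_of_ne (T.le_max' i (mem_of_mem_erase hi))
          (ne_of_mem_erase hi)
        ext j
        simp only [mem_filter, mem_erase]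
        constructor
        · rintro ⟨⟨_, hj⟩, h2⟩; exact ⟨hj, h2⟩
        · rintro ⟨hj, h2⟩; exact ⟨⟨ne_of_lt (h2.trans him), hj⟩, h2⟩
      rw [← Finset.add_sum_erase _ _ hmem, hfilter_m,
        Finset.sum_congr rfl (fun i hi => by rw [← hstep i hi]),
        ih (T.erase m) (Finset.erase_ssubset hmem), hcard, Finset.sum_range_succ]
      ring

lemma swap_sum' {n : ℕ} {E : Type*} [Fintype E] [DecidableEq E]
    (T : Fin n → Finset E) (F : Fin n → E → ℝ) :
    ∑ i, ∑ e ∈ T i, F i e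
      = ∑ e, ∑ i ∈ univ.filter (fun i => e ∈ T i), F i e := by
  have h1 : ∀ i, ∑ e ∈ T i, F i e = ∑ e, if e ∈ T i then F i e else 0 := by
    intro i
    rw [Finset.sum_ite_mem, Finset.univ_inter]
  simp_rw [h1]
  rw [Finset.sum_comm]
  refine Finset.sum_congr rfl fun e _ => ?_
  rw [Finset.sum_filter]

lemma swap_sum {n : ℕ} {E : Type*} [Fintype E] [DecidableEq E]
    (T : Fin n → Finset E) (f : E → ℝ) :
    ∑ i, ∑ e ∈ T i, f e
      = ∑ e, ((univ.filter fun i => e ∈ T i).card : ℝ) * f e := by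
  rw [swap_sum' T (fun _ e => f e)]
  refine Finset.sum_congr rfl fun e _ => ?_
  rw [Finset.sum_const, nsmul_eq_mul]

lemma cube_sum (m : ℕ) :
    ∑ k ∈ Finset.range m, ((k : ℝ) + 1) ^ 3 = (m : ℝ) ^ 2 * ((m : ℝ) + 1) ^ 2 / 4 := by
  induction m with
  | zero => simp
  | succ m ih =>
    rw [Finset.sum_range_succ, ih]
    push_cast
    ring

lemma amgm4 (u v : ℝ) (hu : 0 ≤ u) (hv : 0 ≤ v) : 4 * u ^ 3 * v ≤ 3 * u ^ 4 + v ^ 4 := by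
  nlinarith [mul_nonneg (sq_nonneg (u - v)) (by positivity : (0:ℝ) ≤ 3 * u ^ 2 + 2 * (u * v) + v ^ 2)]

lemma key (ls lo : ℕ) :
    (ls : ℝ) ^ 4 + (369 / 34) * lo * ((ls : ℝ) + 1) ^ 3
      ≤ (17929 / 34) * (lo : ℝ) ^ 4 + (369 / 136) * (ls : ℝ) ^ 2 * ((ls : ℝ) + 1) ^ 2 := by
  set L : ℝ := (ls : ℝ) with hLdef
  set O : ℝ := (lo : ℝ) with hOdef
  have hL0 : (0 : ℝ) ≤ L := Nat.cast_nonneg ls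
  rcases Nat.eq_zero_or_pos lo with h | h
  · subst h
    simp only [hOdef, Nat.cast_zero]
    nlinarith [mul_nonneg (sq_nonneg L) hL0, sq_nonneg L]
  · have hO1 : (1 : ℝ) ≤ O := by
      rw [hOdef]; exact_mod_cast Nat.one_le_iff_ne_zero.2 (Nat.pos_iff_ne_zero.1 h)
    by_cases hls : ls ≤ 5
    · interval_cases ls
      · simp only [hLdef, Nat.cast_zero]
        nlinarith [sq_nonneg (O - 1), mul_nonneg (sub_nonneg.2 hO1) (sq_nonneg O),
          mul_nonneg (mul_nonneg (sub_nonneg.2 hO1) (sub_nonneg.2 hO1)) (sq_nonneg O),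
          mul_nonneg (sub_nonneg.2 hO1) (sq_nonneg (O - 1))]
      · simp only [hLdef, Nat.cast_one]
        nlinarith [sq_nonneg (O - 1), mul_nonneg (sub_nonneg.2 hO1) (sq_nonneg O),
          mul_nonneg (mul_nonneg (sub_nonneg.2 hO1) (sub_nonneg.2 hO1)) (sq_nonneg O),
          mul_nonneg (sub_nonneg.2 hO1) (sq_nonneg (O - 1))]
      · simp only [hLdef]
        norm_num
        nlinarith [sq_nonneg (O - 1), mul_nonneg (sub_nonneg.2 hO1) (sq_nonneg O),
          mul_nonneg (mul_nonneg (sub_nonneg.2 hO1) (sub_nonneg.2 hO1)) (sq_nonneg O),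
          mul_nonneg (sub_nonneg.2 hO1) (sq_nonneg (O - 1))]
      · simp only [hLdef]
        norm_num
        nlinarith [sq_nonneg (O - 1), mul_nonneg (sub_nonneg.2 hO1) (sq_nonneg O),
          mul_nonneg (mul_nonneg (sub_nonneg.2 hO1) (sub_nonneg.2 hO1)) (sq_nonneg O),
          mul_nonneg (sub_nonneg.2 hO1) (sq_nonneg (O - 1))]
      · simp only [hLdef]
        norm_num
        nlinarith [sq_nonneg (O - 1), mul_nonneg (sub_nonneg.2 hO1) (sq_nonneg O),
          mul_nonneg (mul_nonneg (sub_nonneg.2 hO1) (sub_nonneg.2 hO1)) (sq_nonneg O),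
          mul_nonneg (sub_nonneg.2 hO1) (sq_nonneg (O - 1))]
      · -- ls = 5 : the tight case, needs integrality of lo
        simp only [hLdef]
        norm_num
        rcases eq_or_lt_of_le (Nat.one_le_iff_ne_zero.2 (Nat.pos_iff_ne_zero.1 h)) with h1 | h2
        · have : O = 1 := by rw [hOdef, ← h1]; norm_num
          rw [this]; norm_num
        · have hO2 : (2 : ℝ) ≤ O := by rw [hOdef]; exact_mod_cast h2
          nlinarith [sq_nonneg (O - 2), mul_nonneg (sub_nonneg.2 hO2) (sq_nonneg O),
            mul_nonneg (mul_nonneg (sub_nonneg.2 hO2) (sub_nonneg.2 hO2)) (sq_nonneg O),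
            mul_nonneg (sub_nonneg.2 hO2) (sq_nonneg (O - 2))]
    · have hL6 : (6 : ℝ) ≤ L := by
        rw [hLdef]; exact_mod_cast (by omega : 6 ≤ ls)
      nlinarith [amgm4 ((173/1000) * (L + 1)) O (by positivity) (by positivity),
        mul_nonneg (mul_nonneg (sub_nonneg.2 hL6) (sub_nonneg.2 hL6))
          (mul_nonneg (sub_nonneg.2 hL6) (sub_nonneg.2 hL6)),
        mul_nonneg (mul_nonneg (sub_nonneg.2 hL6) (sub_nonneg.2 hL6)) (sub_nonneg.2 hL6),
        mul_nonneg (sub_nonneg.2 hL6) (sub_nonneg.2 hL6), sub_nonneg.2 hL6]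

end Aux

theorem oneround_unweighted_cubic
    (n : ℕ) (E : Type*) [Fintype E] [DecidableEq E]
    (w : Fin n → ℝ) (hw : ∀ i, w i = 1)
    (Strat : Fin n → Set (Finset E)) (hStrat : ∀ i, (Strat i).Nonempty)
    (α : E → ℝ) (hα : ∀ e, 0 ≤ α e)
    (ℓ : E → ℝ → ℝ) (hℓ : ∀ e x, ℓ e x = α e * x ^ 3)
    (S : Fin n → Finset E)
    (hWalk : ∀ i, S i ∈ Strat i ∧ ∀ t ∈ Strat i,
      ∑ e ∈ S i, ℓ e (preLoad w S i e + w i) ≤ ∑ e ∈ t, ℓ e (preLoad w S i e + w i))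
    (O : Fin n → Finset E) (hO : ∀ i, O i ∈ Strat i) :
    social w ℓ S ≤ (17929 / 34) * social w ℓ O := by
  set LS : E → ℕ := fun e => (univ.filter fun i => e ∈ S i).card with hLS
  set LO : E → ℕ := fun e => (univ.filter fun i => e ∈ O i).card with hLO
  have hloadS : ∀ e, load w S e = (LS e : ℝ) := by
    intro e
    rw [load, Finset.sum_congr rfl fun i _ => hw i, Finset.sum_const, nsmul_eq_mul, mul_one]
  have hloadO : ∀ e, load w O e = (LO e : ℝ) := by
    intro e
    rw [load, Finset.sum_congr rfl fun i _ => hw i, Finset.sum_const, nsmul_eq_mul, mul_one]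
  have hpre : ∀ (i : Fin n) (e : E),
      preLoad w S i e = (((univ.filter fun j => e ∈ S j)).filter fun j => j < i).card := by
    intro i e
    rw [preLoad, Finset.sum_congr rfl fun j _ => hw j, Finset.sum_const, nsmul_eq_mul, mul_one]
    have hset : (univ.filter fun j => j < i ∧ e ∈ S j)
        = ((univ.filter fun j => e ∈ S j).filter fun j => j < i) := by
      rw [Finset.filter_filter]
      apply Finset.filter_congr
      intro j _
      exact ⟨fun h => ⟨h.2, h.1⟩, fun h => ⟨h.2, h.1⟩⟩
    rw [hset]
  have hcostS : ∀ i, cost w ℓ S i = ∑ e ∈ S i, α e * ((LS e : ℝ)) ^ 3 := by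
    intro i
    rw [cost]
    exact Finset.sum_congr rfl fun e _ => by rw [hℓ, hloadS]
  have hcostO : ∀ i, cost w ℓ O i = ∑ e ∈ O i, α e * ((LO e : ℝ)) ^ 3 := by
    intro i
    rw [cost]
    exact Finset.sum_congr rfl fun e _ => by rw [hℓ, hloadO]
  have hsocS : social w ℓ S = ∑ e, α e * (LS e : ℝ) ^ 4 := by
    calc social w ℓ S = ∑ i, ∑ e ∈ S i, α e * ((LS e : ℝ)) ^ 3 :=
          Finset.sum_congr rfl fun i _ => hcostS i
      _ = ∑ e, (((univ.filter fun i => e ∈ S i).card : ℝ)) * (α e * (LS e : ℝ) ^ 3) :=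
          swap_sum _ _
      _ = ∑ e, α e * (LS e : ℝ) ^ 4 := Finset.sum_congr rfl fun e _ => by
          simp only [hLS]; ring
  have hsocO : social w ℓ O = ∑ e, α e * (LO e : ℝ) ^ 4 := by
    calc social w ℓ O = ∑ i, ∑ e ∈ O i, α e * ((LO e : ℝ)) ^ 3 :=
          Finset.sum_congr rfl fun i _ => hcostO i
      _ = ∑ e, (((univ.filter fun i => e ∈ O i).card : ℝ)) * (α e * (LO e : ℝ) ^ 3) :=
          swap_sum _ _
      _ = ∑ e, α e * (LO e : ℝ) ^ 4 := Finset.sum_congr rfl fun e _ => by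
          simp only [hLO]; ring
  have hPhi : (∑ i, ∑ e ∈ S i, α e * (preLoad w S i e + 1) ^ 3)
      = ∑ e, α e * ((LS e : ℝ) ^ 2 * ((LS e : ℝ) + 1) ^ 2 / 4) := by
    rw [swap_sum' S (fun i e => α e * (preLoad w S i e + 1) ^ 3)]
    refine Finset.sum_congr rfl fun e _ => ?_
    calc ∑ i ∈ univ.filter (fun i => e ∈ S i), α e * (preLoad w S i e + 1) ^ 3
        = ∑ i ∈ univ.filter (fun i => e ∈ S i),
            (fun k : ℕ => α e * ((k : ℝ) + 1) ^ 3)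
              (((univ.filter fun j => e ∈ S j).filter fun j => j < i).card) :=
          Finset.sum_congr rfl fun i _ => by rw [hpre i e]
      _ = ∑ k ∈ Finset.range (univ.filter fun j => e ∈ S j).card,
            (fun k : ℕ => α e * ((k : ℝ) + 1) ^ 3) k :=
          rank_sum (fun k : ℕ => α e * ((k : ℝ) + 1) ^ 3) (univ.filter fun j => e ∈ S j)
      _ = α e * ((LS e : ℝ) ^ 2 * ((LS e : ℝ) + 1) ^ 2 / 4) := by
          simp only
          rw [← Finset.mul_sum, cube_sum]
  have hgreedy : ∀ i, (∑ e ∈ S i, α e * (preLoad w S i e + 1) ^ 3)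
      ≤ ∑ e ∈ O i, α e * (preLoad w S i e + 1) ^ 3 := by
    intro i
    have h := (hWalk i).2 (O i) (hO i)
    simpa only [hℓ, hw i] using h
  have hmono : ∀ i, (∑ e ∈ O i, α e * (preLoad w S i e + 1) ^ 3)
      ≤ ∑ e ∈ O i, α e * ((LS e : ℝ) + 1) ^ 3 := by
    intro i
    refine Finset.sum_le_sum fun e _ => ?_
    have hp0 : 0 ≤ preLoad w S i e := by rw [hpre]; positivity
    have hple : preLoad w S i e ≤ (LS e : ℝ) := by
      rw [hpre]
      simp only [hLS]
      exact_mod_cast Finset.card_le_card (Finset.filter_subset _ _)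
    refine mul_le_mul_of_nonneg_left ?_ (hα e)
    exact pow_le_pow_left₀ (by linarith) (by linarith) 3
  have hchain : (∑ e, α e * ((LS e : ℝ) ^ 2 * ((LS e : ℝ) + 1) ^ 2 / 4))
      ≤ ∑ e, (LO e : ℝ) * (α e * ((LS e : ℝ) + 1) ^ 3) := by
    calc (∑ e, α e * ((LS e : ℝ) ^ 2 * ((LS e : ℝ) + 1) ^ 2 / 4))
        = ∑ i, ∑ e ∈ S i, α e * (preLoad w S i e + 1) ^ 3 := hPhi.symm
      _ ≤ ∑ i, ∑ e ∈ O i, α e * (preLoad w S i e + 1) ^ 3 :=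
          Finset.sum_le_sum fun i _ => hgreedy i
      _ ≤ ∑ i, ∑ e ∈ O i, α e * ((LS e : ℝ) + 1) ^ 3 :=
          Finset.sum_le_sum fun i _ => hmono i
      _ = ∑ e, (((univ.filter fun i => e ∈ O i).card : ℝ)) * (α e * ((LS e : ℝ) + 1) ^ 3) :=
          swap_sum _ _
      _ = ∑ e, (LO e : ℝ) * (α e * ((LS e : ℝ) + 1) ^ 3) := by simp only [hLO]
  have hptw : ∀ e, α e * (LS e : ℝ) ^ 4 ≤ (17929 / 34) * (α e * (LO e : ℝ) ^ 4)
      + (369 / 34) * (α e * ((LS e : ℝ) ^ 2 * ((LS e : ℝ) + 1) ^ 2 / 4)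
          - (LO e : ℝ) * (α e * ((LS e : ℝ) + 1) ^ 3)) := by
    intro e
    have hk := mul_le_mul_of_nonneg_left (key (LS e) (LO e)) (hα e)
    nlinarith [hk]
  calc social w ℓ S = ∑ e, α e * (LS e : ℝ) ^ 4 := hsocS
    _ ≤ ∑ e, ((17929 / 34) * (α e * (LO e : ℝ) ^ 4)
        + (369 / 34) * (α e * ((LS e : ℝ) ^ 2 * ((LS e : ℝ) + 1) ^ 2 / 4)
            - (LO e : ℝ) * (α e * ((LS e : ℝ) + 1) ^ 3))) :=
      Finset.sum_le_sum fun e _ => hptw e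
    _ = (17929 / 34) * (∑ e, α e * (LO e : ℝ) ^ 4)
        + (369 / 34) * ((∑ e, α e * ((LS e : ℝ) ^ 2 * ((LS e : ℝ) + 1) ^ 2 / 4))
            - ∑ e, (LO e : ℝ) * (α e * ((LS e : ℝ) + 1) ^ 3)) := by
      rw [Finset.sum_add_distrib, ← Finset.mul_sum, ← Finset.mul_sum, Finset.sum_sub_distrib]
    _ ≤ (17929 / 34) * (∑ e, α e * (LO e : ℝ) ^ 4) := by
      linarith [hchain]
    _ = (17929 / 34) * social w ℓ O := by rw [hsocO]
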